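/- Let G be a finite group, H ≤ G, and u_H ∈ B(H) ⊗ ℚ the primitive idempotent of the rational Burnside ring of H supported at H. Then Res^G_H(Ind^G_H(u_H)) = |N_G(H)/H| · u_H. -/

import Mathlib

open Pointwise Finsupp

noncomputable section

/-- Conjugacy classes of subgroups of `G`. -/
def SubgroupConj (G : Type*) [Group G] : Type _ :=
  Quotient (MulAction.orbitRel (ConjAct G) (Subgroup G))

variable {G : Type*} [Group G]

/-- The conjugacy class of a subgroup. -/
def Subgroup.toConj (K : Subgroup G) : SubgroupConj G :=
  Quotient.mk (MulAction.orbitRel (ConjAct G) (Subgroup G)) K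

/-- A representative of a conjugacy class of subgroups. -/
def SubgroupConj.rep (c : SubgroupConj G) : Subgroup G := Quotient.out c

instance : DecidableEq (SubgroupConj G) := Classical.decEq _

instance [Finite G] : Finite (Subgroup G) :=
  Finite.of_injective (fun H => (H : Set G)) fun _ _ h => SetLike.ext' h

instance [Finite G] : Finite (SubgroupConj G) := Quotient.finite _

noncomputable instance [Finite G] : Fintype (SubgroupConj G) := Fintype.ofFinite _

instance [Finite G] (s t : Set G) : Finite (DoubleCoset.Quotient s t) :=
  Quotient.finite _

noncomputable instance [Finite G] (s t : Set G) : Fintype (DoubleCoset.Quotient s t) :=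
  Fintype.ofFinite _

/-- The conjugate subgroup `g K g⁻¹`. -/
def conjSub (g : G) (K : Subgroup G) : Subgroup G :=
  Subgroup.map (MulAut.conj g).toMonoidHom K

/-- The rational Burnside ring of `G`, as the free `ℚ`-module on the classes `[G/Γ]`. -/
abbrev BQ (G : Type*) [Group G] := SubgroupConj G →₀ ℚ

variable [Finite G]

/-- The double coset formula for the product of two basis elements
`⟨Γ⟩⟨Γ'⟩ = Σ_{g ∈ Γ'\G\Γ} ⟨Γ ∩ g⁻¹ Γ' g⟩`. -/
def basisMul (c d : SubgroupConj G) : BQ G :=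
  ∑ q : DoubleCoset.Quotient (d.rep : Set G) (c.rep : Set G),
    Finsupp.single (Subgroup.toConj (c.rep ⊓ conjSub (Quotient.out q)⁻¹ d.rep)) 1

/-- The multiplication of the Burnside ring in the basis `[G/Γ]`. -/
def mulB (x y : BQ G) : BQ G :=
  x.sum fun c a => y.sum fun d b => (a * b) • basisMul c d

/-- The unit `[G/G]` of the Burnside ring. -/
def oneB : BQ G := Finsupp.single (Subgroup.toConj (⊤ : Subgroup G)) 1

/-- Induction along an (injective) group homomorphism. -/
def indF {H : Type*} [Group H] (f : H →* G) (y : BQ H) : BQ G :=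
  y.sum fun c a => Finsupp.single (Subgroup.toConj (c.rep.map f)) a

/-- Restriction of the basis element `[G/Γ]` along `f : H →* G`:
`Res [G/Γ] = Σ_{g ∈ f(H)\G/Γ} [H / f⁻¹(g Γ g⁻¹)]`. -/
def resBasis {H : Type*} [Group H] (f : H →* G) (c : SubgroupConj G) : BQ H :=
  ∑ q : DoubleCoset.Quotient (f.range : Set G) (c.rep : Set G),
    Finsupp.single (Subgroup.toConj ((conjSub (Quotient.out q) c.rep).comap f)) 1

/-- Restriction along a group homomorphism. -/
def resF {H : Type*} [Group H] (f : H →* G) (x : BQ G) : BQ H :=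
  x.sum fun c a => a • resBasis f c

/-- The mark of the basis element `[G/Γ]` at (the class of) `Δ`: the number of
`Δ`-fixed points of `G/Γ`. -/
def markBasis (c d : SubgroupConj G) : ℚ :=
  (Nat.card {x : G ⧸ c.rep // ∀ k ∈ d.rep, k • x = x} : ℚ)

/-- The mark homomorphism, in the basis `[G/Γ]`. -/
def markMap (x : BQ G) : SubgroupConj G → ℚ :=
  fun d => x.sum fun c a => a * markBasis c d

/-- `x` is the primitive idempotent of `B(G) ⊗ ℚ` supported at the full subgroup:
its mark at `G` is `1` and its marks at all proper subgroups vanish. -/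
def IsTopIdem (x : BQ G) : Prop :=
  markMap x = fun d => if d = Subgroup.toConj (⊤ : Subgroup G) then 1 else 0

/-- `|N_G(H)/H|`. -/
def nuG (H : Subgroup G) : ℕ :=
  Nat.card ((Subgroup.normalizer (H : Set G)) ⧸ H.subgroupOf (Subgroup.normalizer (H : Set G)))


/-- The conjugation isomorphism `H → gHg⁻¹`, as a monoid homomorphism. -/
def conjHom (g : G) (H : Subgroup G) : ↥H →* ↥(conjSub g H) :=
  ((MulAut.conj g).toMonoidHom.comp H.subtype).codRestrict (conjSub g H)
    (fun h => Subgroup.mem_map_of_mem _ h.2)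

/-- Conjugation by an element of the normalizer of `H`, as an endomorphism of `H`. -/
def normConjHom (H : Subgroup G) (n : G) (hn : n ∈ Subgroup.normalizer (H : Set G)) : ↥H →* ↥H :=
  ((MulAut.conj n).toMonoidHom.comp H.subtype).codRestrict H
    (fun h => by simpa using (Subgroup.mem_normalizer_iff.mp hn ↑h).mp h.2)


/-! ### Auxiliary lemmas -/

section Aux

variable {G : Type*} [Group G]

lemma mem_conjSub {g x : G} {K : Subgroup G} : x ∈ conjSub g K ↔ g⁻¹ * x * g ∈ K := by
  constructor
  · rintro ⟨y, hy, rfl⟩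
    simpa [MulAut.conj_apply, mul_assoc] using hy
  · intro h
    exact ⟨g⁻¹ * x * g, h, by simp [MulAut.conj_apply, mul_assoc]⟩

lemma conjSub_conjSub (a b : G) (K : Subgroup G) :
    conjSub a (conjSub b K) = conjSub (a * b) K := by
  ext x
  simp only [mem_conjSub, mul_assoc, mul_inv_rev]

lemma conjSub_one (K : Subgroup G) : conjSub 1 K = K := by
  ext x; simp [mem_conjSub]

lemma conjSub_top (g : G) : conjSub g (⊤ : Subgroup G) = ⊤ := by
  ext x; simp [mem_conjSub]

lemma smul_conj (g : ConjAct G) (K : Subgroup G) :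
    g • K = conjSub (ConjAct.ofConjAct g) K := by
  ext x
  rw [Subgroup.mem_pointwise_smul_iff_inv_smul_mem, mem_conjSub, ConjAct.smul_def]
  simp [mul_assoc]

lemma toConj_eq_iff {K L : Subgroup G} :
    Subgroup.toConj K = Subgroup.toConj L ↔ ∃ g : G, conjSub g L = K := by
  constructor
  · intro h
    have := Quotient.exact h
    obtain ⟨g, hg⟩ := this
    exact ⟨ConjAct.ofConjAct g, by rw [← smul_conj]; exact hg⟩
  · rintro ⟨g, rfl⟩
    exact Quotient.sound ⟨ConjAct.toConjAct g, by show _ • _ = _; rw [smul_conj, ConjAct.ofConjAct_toConjAct]⟩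

lemma toConj_rep (c : SubgroupConj G) : Subgroup.toConj c.rep = c := Quotient.out_eq c

lemma rep_toConj (K : Subgroup G) : ∃ g : G, (Subgroup.toConj K).rep = conjSub g K := by
  have h : Subgroup.toConj (Subgroup.toConj K).rep = Subgroup.toConj K := toConj_rep _
  obtain ⟨g, hg⟩ := toConj_eq_iff.mp h
  exact ⟨g, hg.symm⟩

lemma rep_top : (Subgroup.toConj (⊤ : Subgroup G)).rep = ⊤ := by
  obtain ⟨g, hg⟩ := rep_toConj (⊤ : Subgroup G)
  rw [hg, conjSub_top]

end Aux

section Marks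

variable {G : Type*} [Group G]

/-- The number of `D`-fixed points of `G ⧸ Γ`, as a rational number. -/
def mQ (Γ D : Subgroup G) : ℚ :=
  (Nat.card {x : G ⧸ Γ // ∀ k ∈ D, k • x = x} : ℚ)

lemma markBasis_def (c d : SubgroupConj G) : markBasis c d = mQ c.rep d.rep := rfl

lemma smul_mk_quot (Γ : Subgroup G) (k a : G) :
    k • (QuotientGroup.mk a : G ⧸ Γ) = QuotientGroup.mk (k * a) :=
  MulAction.Quotient.smul_mk Γ k a

lemma fixed_mk_iff (Γ D : Subgroup G) (a : G) :
    (∀ k ∈ D, k • (QuotientGroup.mk a : G ⧸ Γ) = QuotientGroup.mk a) ↔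
      ∀ k ∈ D, a⁻¹ * (k * a) ∈ Γ := by
  refine forall₂_congr fun k _ => ?_
  rw [smul_mk_quot, QuotientGroup.eq,
    show (k * a)⁻¹ * a = (a⁻¹ * (k * a))⁻¹ by group, inv_mem_iff]

/-- Translation equivalence `G⧸Γ ≃ G⧸gΓg⁻¹`. -/
def quotConjEquiv (Γ : Subgroup G) (g : G) : G ⧸ Γ ≃ G ⧸ conjSub g Γ where
  toFun := Quotient.map' (fun a => a * g⁻¹) (by
    intro a b hab
    rw [QuotientGroup.leftRel_apply] at hab ⊢
    rw [mem_conjSub]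
    simpa [mul_assoc] using hab)
  invFun := Quotient.map' (fun a => a * g) (by
    intro a b hab
    rw [QuotientGroup.leftRel_apply] at hab ⊢
    rw [mem_conjSub] at hab
    simpa [mul_assoc] using hab)
  left_inv := by
    intro x
    induction x using Quotient.inductionOn' with
    | h a => simp [Quotient.map'_mk'', mul_assoc]
  right_inv := by
    intro x
    induction x using Quotient.inductionOn' with
    | h a => simp [Quotient.map'_mk'', mul_assoc]

lemma quotConjEquiv_mk (Γ : Subgroup G) (g a : G) :
    quotConjEquiv Γ g (QuotientGroup.mk a) = QuotientGroup.mk (a * g⁻¹) := rfl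

lemma quotConjEquiv_smul (Γ : Subgroup G) (g k : G) (x : G ⧸ Γ) :
    quotConjEquiv Γ g (k • x) = k • quotConjEquiv Γ g x := by
  induction x using Quotient.inductionOn' with
  | h a =>
    show quotConjEquiv Γ g (k • (QuotientGroup.mk a : G ⧸ Γ)) = _
    rw [smul_mk_quot, quotConjEquiv_mk, quotConjEquiv_mk, smul_mk_quot, mul_assoc]

lemma mQ_conj_left (g : G) (Γ D : Subgroup G) : mQ (conjSub g Γ) D = mQ Γ D := by
  unfold mQ
  congr 1
  refine (Nat.card_congr (Equiv.subtypeEquiv (quotConjEquiv Γ g) fun x => ?_)).symm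
  refine forall₂_congr fun k hk => ?_
  rw [← quotConjEquiv_smul, (quotConjEquiv Γ g).apply_eq_iff_eq]

lemma mQ_conj_right (g : G) (Γ D : Subgroup G) : mQ Γ (conjSub g D) = mQ Γ D := by
  unfold mQ
  congr 1
  refine (Nat.card_congr (Equiv.subtypeEquiv (MulAction.toPerm g : Equiv.Perm (G ⧸ Γ))
    fun x => ?_)).symm
  simp only [MulAction.toPerm_apply]
  constructor
  · intro h k' hk'
    have hk : g⁻¹ * k' * g ∈ D := mem_conjSub.mp hk'
    have := h _ hk
    show k' • (g • x) = g • x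
    calc k' • (g • x) = (k' * g) • x := (smul_smul _ _ _)
    _ = (g * (g⁻¹ * k' * g)) • x := by group
    _ = g • ((g⁻¹ * k' * g) • x) := (smul_smul _ _ _).symm
    _ = g • x := by rw [this]
  · intro h k hk
    have hk' : g * k * g⁻¹ ∈ conjSub g D := mem_conjSub.mpr (by simpa [mul_assoc] using hk)
    have h2 := h _ hk'
    rw [smul_smul] at h2
    have h3 : g * k * g⁻¹ * g = g * k := by group
    rw [h3, mul_smul] at h2
    exact smul_left_cancel g h2

lemma mQ_rep_left (K D : Subgroup G) : mQ (Subgroup.toConj K).rep D = mQ K D := by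
  obtain ⟨g, hg⟩ := rep_toConj K
  rw [hg, mQ_conj_left]

lemma mQ_rep_right (Γ K : Subgroup G) : mQ Γ (Subgroup.toConj K).rep = mQ Γ K := by
  obtain ⟨g, hg⟩ := rep_toConj K
  rw [hg, mQ_conj_right]

lemma markBasis_toConj (Γ D : Subgroup G) :
    markBasis (Subgroup.toConj Γ) (Subgroup.toConj D) = mQ Γ D := by
  rw [markBasis_def, mQ_rep_left, mQ_rep_right]

end Marks

section MarkMap

variable {G : Type*} [Group G] [Finite G]

lemma natCard_conjSub (g : G) (K : Subgroup G) : Nat.card (conjSub g K) = Nat.card K :=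
  (Nat.card_congr (K.equivMapOfInjective (MulAut.conj g).toMonoidHom
    (MulAut.conj g).injective).toEquiv).symm

lemma markMap_eq_linearCombination (x : BQ G) (d : SubgroupConj G) :
    markMap x d = Finsupp.linearCombination ℚ (fun c => markBasis c d) x := by
  rw [Finsupp.linearCombination_apply]
  rfl

lemma markMap_sub (x y : BQ G) (d : SubgroupConj G) :
    markMap (x - y) d = markMap x d - markMap y d := by
  simp only [markMap_eq_linearCombination, map_sub]

lemma markBasis_self_ne_zero (c : SubgroupConj G) : markBasis c c ≠ 0 := by
  rw [markBasis_def, mQ]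
  have hne : Nonempty {x : G ⧸ c.rep // ∀ k ∈ c.rep, k • x = x} := by
    refine ⟨⟨QuotientGroup.mk 1, ?_⟩⟩
    rw [fixed_mk_iff]
    intro k hk
    simpa using hk
  have hpos : 0 < Nat.card {x : G ⧸ c.rep // ∀ k ∈ c.rep, k • x = x} := Nat.card_pos
  exact Nat.cast_ne_zero.mpr hpos.ne'

lemma markMap_zero_of (x : BQ G) (hx : ∀ d, markMap x d = 0) : x = 0 := by
  by_contra hne
  have hsupp : x.support.Nonempty := Finsupp.support_nonempty_iff.mpr hne
  obtain ⟨c, hc, hmax⟩ := x.support.exists_max_image (fun d => Nat.card d.rep) hsupp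
  have h0 := hx c
  rw [markMap, Finsupp.sum, Finset.sum_eq_single c] at h0
  · have hxc : x c ≠ 0 := Finsupp.mem_support_iff.mp hc
    rcases mul_eq_zero.mp h0 with h | h
    · exact hxc h
    · exact markBasis_self_ne_zero c h
  · intro e he hec
    have hzero : markBasis e c = 0 := by
      by_contra hb
      rw [markBasis_def, mQ] at hb
      have hpos : Nat.card {x : G ⧸ e.rep // ∀ k ∈ c.rep, k • x = x} ≠ 0 := by
        exact_mod_cast hb
      have hne2 : Nonempty {x : G ⧸ e.rep // ∀ k ∈ c.rep, k • x = x} :=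
        Nat.card_ne_zero.mp hpos |>.1
      obtain ⟨⟨x0, hx0⟩⟩ := hne2
      obtain ⟨a, rfl⟩ := QuotientGroup.mk_surjective x0
      rw [fixed_mk_iff] at hx0
      have hle : conjSub a⁻¹ c.rep ≤ e.rep := by
        intro y hy
        have hy' : a * y * a⁻¹ ∈ c.rep := by
          have := mem_conjSub.mp hy
          simpa using this
        have := hx0 _ hy'
        have heq : a⁻¹ * (a * y * a⁻¹ * a) = y := by group
        rwa [heq] at this
      have hcard : Nat.card e.rep ≤ Nat.card (conjSub a⁻¹ c.rep) := by
        rw [natCard_conjSub]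
        exact hmax e he
      have heq := Subgroup.eq_of_le_of_card_ge hle hcard
      have : e = c := by
        rw [← toConj_rep e, ← toConj_rep c, ← heq]
        exact (toConj_eq_iff.mpr ⟨a⁻¹, rfl⟩)
      exact hec this
    rw [hzero, mul_zero]
  · intro h
    rw [Finsupp.notMem_support_iff.mp h, zero_mul]

end MarkMap

section Mackey

lemma natCard_sigma {ι : Type*} [Fintype ι] (α : ι → Type*) [∀ i, Finite (α i)] :
    Nat.card (Σ i, α i) = ∑ i, Nat.card (α i) := by
  letI : ∀ i, Fintype (α i) := fun i => Fintype.ofFinite _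
  rw [Nat.card_eq_fintype_card, Fintype.card_sigma]
  exact Finset.sum_congr rfl fun i _ => (Nat.card_eq_fintype_card).symm

variable {G : Type*} [Group G] {H : Type*} [Group H]

/-- The map `H ⧸ f⁻¹(gΓg⁻¹) → G ⧸ Γ`, `h ↦ f h * g`, where `g = out q`. -/
def mackeyFun (f : H →* G) (Γ : Subgroup G) (q : DoubleCoset.Quotient (f.range : Set G) (Γ : Set G))
    (y : H ⧸ (conjSub (Quotient.out q) Γ).comap f) : G ⧸ Γ :=
  Quotient.liftOn' y (fun h => QuotientGroup.mk (f h * Quotient.out q)) (by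
    intro h h' hrel
    rw [QuotientGroup.leftRel_apply, Subgroup.mem_comap] at hrel
    have hmem : (Quotient.out q)⁻¹ * f (h⁻¹ * h') * Quotient.out q ∈ Γ := mem_conjSub.mp hrel
    apply Quotient.sound'
    rw [QuotientGroup.leftRel_apply]
    have : (f h * Quotient.out q)⁻¹ * (f h' * Quotient.out q) =
        (Quotient.out q)⁻¹ * f (h⁻¹ * h') * Quotient.out q := by
      simp only [map_mul, map_inv]; group
    rw [this]
    exact hmem)

lemma mackeyFun_mk (f : H →* G) (Γ : Subgroup G)
    (q : DoubleCoset.Quotient (f.range : Set G) (Γ : Set G)) (h : H) :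
    mackeyFun f Γ q (QuotientGroup.mk h) = QuotientGroup.mk (f h * Quotient.out q) := rfl

lemma mackeyFun_smul (f : H →* G) (Γ : Subgroup G)
    (q : DoubleCoset.Quotient (f.range : Set G) (Γ : Set G)) (d : H)
    (y : H ⧸ (conjSub (Quotient.out q) Γ).comap f) :
    mackeyFun f Γ q (d • y) = f d • mackeyFun f Γ q y := by
  obtain ⟨h, rfl⟩ := QuotientGroup.mk_surjective y
  rw [smul_mk_quot, mackeyFun_mk, mackeyFun_mk, smul_mk_quot, map_mul, mul_assoc]

lemma mackey_card [Finite G] [Finite H] (f : H →* G) (Γ : Subgroup G) (D : Subgroup H) :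
    ∑ q : DoubleCoset.Quotient (f.range : Set G) (Γ : Set G),
      mQ ((conjSub (Quotient.out q) Γ).comap f) D = mQ Γ (D.map f) := by
  classical
  -- the bijection
  set F : (Σ q : DoubleCoset.Quotient (f.range : Set G) (Γ : Set G),
      {y : H ⧸ (conjSub (Quotient.out q) Γ).comap f // ∀ k ∈ D, k • y = y}) →
      {x : G ⧸ Γ // ∀ k ∈ D.map f, k • x = x} :=
    fun p => ⟨mackeyFun f Γ p.1 p.2.1, by
      intro k hk
      obtain ⟨d, hd, rfl⟩ := hk
      show f d • mackeyFun f Γ p.1 p.2.1 = mackeyFun f Γ p.1 p.2.1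
      rw [← mackeyFun_smul, p.2.2 d hd]⟩ with hF
  have hinj : Function.Injective F := by
    rintro ⟨q, y, hy⟩ ⟨q', y', hy'⟩ hpq
    obtain ⟨h₀, rfl⟩ := QuotientGroup.mk_surjective y
    obtain ⟨h₁, rfl⟩ := QuotientGroup.mk_surjective y'
    have heq : mackeyFun f Γ q (QuotientGroup.mk h₀) =
        mackeyFun f Γ q' (QuotientGroup.mk h₁) := congrArg Subtype.val hpq
    rw [mackeyFun_mk, mackeyFun_mk] at heq
    set g := Quotient.out q with hg
    set g' := Quotient.out q' with hg'
    have hγ : (f h₀ * g)⁻¹ * (f h₁ * g') ∈ Γ := QuotientGroup.eq.mp heq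
    have hqq : q = q' := by
      have h1 : DoubleCoset.mk f.range Γ g = DoubleCoset.mk f.range Γ g' := by
        rw [DoubleCoset.eq]
        refine ⟨f (h₁⁻¹ * h₀), ⟨_, rfl⟩, (f h₀ * g)⁻¹ * (f h₁ * g'), hγ, ?_⟩
        simp only [map_mul, map_inv]; group
      rw [hg, hg', DoubleCoset.out_eq', DoubleCoset.out_eq'] at h1
      exact h1
    subst hqq
    have h2 : (QuotientGroup.mk h₀ : H ⧸ (conjSub g Γ).comap f) = QuotientGroup.mk h₁ := by
      rw [QuotientGroup.eq, Subgroup.mem_comap, mem_conjSub]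
      have : g⁻¹ * f (h₀⁻¹ * h₁) * g = (f h₀ * g)⁻¹ * (f h₁ * g) := by
        simp only [map_mul, map_inv]; group
      rw [this]
      exact hγ
    simp only [Sigma.mk.inj_iff, heq_eq_eq]
    exact ⟨trivial, Subtype.ext h2⟩
  have hsurj : Function.Surjective F := by
    rintro ⟨x, hx⟩
    obtain ⟨a, rfl⟩ := QuotientGroup.mk_surjective x
    set q : DoubleCoset.Quotient (f.range : Set G) (Γ : Set G) := DoubleCoset.mk f.range Γ a with hq
    set g := Quotient.out q with hg
    have h1 : DoubleCoset.mk f.range Γ g = DoubleCoset.mk f.range Γ a := by rw [hg, hq, DoubleCoset.out_eq']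
    obtain ⟨h', ⟨h₀, rfl⟩, γ, hγ, ha⟩ := (DoubleCoset.eq _ _ _ _).mp h1
    have hfix : ∀ d ∈ D, d • (QuotientGroup.mk h₀ : H ⧸ (conjSub g Γ).comap f) =
        QuotientGroup.mk h₀ := by
      rw [fixed_mk_iff]
      intro d hd
      rw [Subgroup.mem_comap, mem_conjSub]
      have h2 : a⁻¹ * (f d * a) ∈ Γ := (fixed_mk_iff Γ (D.map f) a).mp hx (f d) ⟨d, hd, rfl⟩
      have h3 : g⁻¹ * f (h₀⁻¹ * (d * h₀)) * g = γ * (a⁻¹ * (f d * a)) * γ⁻¹ := by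
        rw [ha]; simp only [map_mul, map_inv]; group
      rw [h3]
      exact Subgroup.mul_mem _ (Subgroup.mul_mem _ hγ h2) (Subgroup.inv_mem _ hγ)
    refine ⟨⟨q, ⟨QuotientGroup.mk h₀, hfix⟩⟩, ?_⟩
    apply Subtype.ext
    show mackeyFun f Γ q (QuotientGroup.mk h₀) = QuotientGroup.mk a
    rw [mackeyFun_mk, QuotientGroup.eq]
    have : (f h₀ * g)⁻¹ * a = γ := by rw [ha]; group
    rw [← hg, this]
    exact hγ
  -- now count
  have hcard := Nat.card_congr (Equiv.ofBijective F ⟨hinj, hsurj⟩)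
  rw [mQ, ← hcard, natCard_sigma, Nat.cast_sum]
  exact Finset.sum_congr rfl fun q _ => rfl

lemma markMap_resBasis [Finite G] [Finite H] (f : H →* G) (c : SubgroupConj G)
    (d : SubgroupConj H) :
    markMap (resBasis f c) d = mQ c.rep (d.rep.map f) := by
  rw [markMap_eq_linearCombination, resBasis, map_sum]
  have : ∀ q : DoubleCoset.Quotient (f.range : Set G) (c.rep : Set G),
      (Finsupp.linearCombination ℚ (fun e => markBasis e d))
        (Finsupp.single (Subgroup.toConj ((conjSub (Quotient.out q) c.rep).comap f)) 1)
      = mQ ((conjSub (Quotient.out q) c.rep).comap f) d.rep := by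
    intro q
    rw [Finsupp.linearCombination_single, one_smul, ← toConj_rep d, markBasis_toConj]
    exact (mQ_rep_right _ _).symm
  rw [Finset.sum_congr rfl (fun q _ => this q)]
  exact mackey_card f c.rep d.rep

end Mackey

section Fiber

noncomputable instance {G : Type*} [Group G] [Finite G] (K : Subgroup G) :
    Fintype (G ⧸ K) := Fintype.ofFinite _

variable {G : Type*} [Group G] {H : Type*} [Group H]

lemma smul_mk_eq_iff (Γ : Subgroup G) (k a : G) :
    k • (QuotientGroup.mk a : G ⧸ Γ) = QuotientGroup.mk a ↔ a⁻¹ * (k * a) ∈ Γ := by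
  rw [smul_mk_quot, QuotientGroup.eq,
    show (k * a)⁻¹ * a = (a⁻¹ * (k * a))⁻¹ by group, inv_mem_iff]

/-- The map `H ⧸ Γ → G ⧸ f(Γ)`, `h ↦ τ * f h`. -/
def fibFun (f : H →* G) (Γ : Subgroup H) (τ : G) (y : H ⧸ Γ) : G ⧸ Γ.map f :=
  Quotient.liftOn' y (fun h => QuotientGroup.mk (τ * f h)) (by
    intro h h' hrel
    rw [QuotientGroup.leftRel_apply] at hrel
    apply Quotient.sound'
    rw [QuotientGroup.leftRel_apply]
    have : (τ * f h)⁻¹ * (τ * f h') = f (h⁻¹ * h') := by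
      simp only [map_mul, map_inv]; group
    rw [this]
    exact Subgroup.mem_map_of_mem f hrel)

lemma fibFun_mk (f : H →* G) (Γ : Subgroup H) (τ : G) (h : H) :
    fibFun f Γ τ (QuotientGroup.mk h) = QuotientGroup.mk (τ * f h) := rfl

lemma fib_card_of_cond [Finite G] [Finite H] (f : H →* G) (hf : Function.Injective f)
    (Γ D : Subgroup H) (t : G ⧸ f.range)
    (hcond : conjSub (Quotient.out t)⁻¹ (D.map f) ≤ f.range) :
    (Nat.card {x : G ⧸ Γ.map f // (∀ k ∈ D.map f, k • x = x) ∧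
        Subgroup.quotientMapOfLE (Subgroup.map_le_range (f := f) Γ) x = t} : ℚ)
      = mQ Γ ((conjSub (Quotient.out t)⁻¹ (D.map f)).comap f) := by
  set τ := Quotient.out t with hτ
  set Dt := (conjSub τ⁻¹ (D.map f)).comap f with hDt
  set F : {y : H ⧸ Γ // ∀ k ∈ Dt, k • y = y} →
      {x : G ⧸ Γ.map f // (∀ k ∈ D.map f, k • x = x) ∧
        Subgroup.quotientMapOfLE (Subgroup.map_le_range (f := f) Γ) x = t} := by
    refine fun y => ⟨fibFun f Γ τ y.1, ?_, ?_⟩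
    · obtain ⟨h, hh⟩ := QuotientGroup.mk_surjective y.1
      rw [← hh, fibFun_mk]
      intro k hk
      have hk2 : τ⁻¹ * (k * τ) ∈ conjSub τ⁻¹ (D.map f) := by
        rw [mem_conjSub]
        simpa [mul_assoc] using hk
      obtain ⟨e, he⟩ := hcond hk2
      have heDt : e ∈ Dt := by
        rw [hDt, Subgroup.mem_comap, he]
        exact hk2
      have hy : h⁻¹ * (e * h) ∈ Γ := by
        have := y.2 e heDt
        rw [← hh, smul_mk_eq_iff] at this
        exact this
      rw [smul_mk_eq_iff]
      have hk3 : k = τ * f e * τ⁻¹ := by rw [he]; group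
      have heq : (τ * f h)⁻¹ * (k * (τ * f h)) = f (h⁻¹ * (e * h)) := by
        rw [hk3]; simp only [map_mul, map_inv]; group
      rw [heq]
      exact Subgroup.mem_map_of_mem f hy
    · obtain ⟨h, hh⟩ := QuotientGroup.mk_surjective y.1
      rw [← hh, fibFun_mk, Subgroup.quotientMapOfLE_apply_mk,
        QuotientGroup.mk_mul_of_mem τ (MonoidHom.mem_range.mpr ⟨h, rfl⟩)]
      exact QuotientGroup.out_eq' t
  have hinj : Function.Injective F := by
    rintro ⟨y, hy⟩ ⟨y', hy'⟩ hyy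
    obtain ⟨h, rfl⟩ := QuotientGroup.mk_surjective y
    obtain ⟨h', rfl⟩ := QuotientGroup.mk_surjective y'
    have heq : fibFun f Γ τ (QuotientGroup.mk h) = fibFun f Γ τ (QuotientGroup.mk h') :=
      congrArg Subtype.val hyy
    rw [fibFun_mk, fibFun_mk, QuotientGroup.eq] at heq
    have h2 : (τ * f h)⁻¹ * (τ * f h') = f (h⁻¹ * h') := by
      simp only [map_mul, map_inv]; group
    rw [h2] at heq
    obtain ⟨γ, hγΓ, hγ⟩ := heq
    apply Subtype.ext
    show (QuotientGroup.mk h : H ⧸ Γ) = QuotientGroup.mk h'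
    rw [QuotientGroup.eq]
    rw [← hf hγ]
    exact hγΓ
  have hsurj : Function.Surjective F := by
    rintro ⟨x, hfix, hπ⟩
    obtain ⟨a, rfl⟩ := QuotientGroup.mk_surjective x
    rw [Subgroup.quotientMapOfLE_apply_mk] at hπ
    have hta : (QuotientGroup.mk τ : G ⧸ f.range) = QuotientGroup.mk a := by
      rw [hτ, QuotientGroup.out_eq' t, ← hπ]
    obtain ⟨h, hh⟩ := MonoidHom.mem_range.mp (QuotientGroup.eq.mp hta)
    have ha : a = τ * f h := by rw [hh]; group
    have hfixh : ∀ e ∈ Dt, e • (QuotientGroup.mk h : H ⧸ Γ) = QuotientGroup.mk h := by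
      intro e heDt
      have hk : τ * f e * τ⁻¹ ∈ D.map f := by
        have := mem_conjSub.mp (Subgroup.mem_comap.mp heDt)
        simpa using this
      have h2 := hfix _ hk
      rw [smul_mk_eq_iff] at h2 ⊢
      have h3 : a⁻¹ * (τ * f e * τ⁻¹ * a) = f (h⁻¹ * (e * h)) := by
        rw [ha]; simp only [map_mul, map_inv]; group
      rw [h3] at h2
      obtain ⟨γ, hγΓ, hγ⟩ := h2
      rw [← hf hγ]
      exact hγΓ
    refine ⟨⟨QuotientGroup.mk h, hfixh⟩, ?_⟩
    apply Subtype.ext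
    show fibFun f Γ τ (QuotientGroup.mk h) = QuotientGroup.mk a
    rw [fibFun_mk, ha]
  have hcard := Nat.card_congr (Equiv.ofBijective F ⟨hinj, hsurj⟩)
  rw [mQ, ← hcard]

lemma fib_card_of_not_cond [Finite G] [Finite H] (f : H →* G)
    (Γ D : Subgroup H) (t : G ⧸ f.range)
    (hcond : ¬ conjSub (Quotient.out t)⁻¹ (D.map f) ≤ f.range) :
    Nat.card {x : G ⧸ Γ.map f // (∀ k ∈ D.map f, k • x = x) ∧
        Subgroup.quotientMapOfLE (Subgroup.map_le_range (f := f) Γ) x = t} = 0 := by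
  set τ := Quotient.out t with hτ
  have : IsEmpty {x : G ⧸ Γ.map f // (∀ k ∈ D.map f, k • x = x) ∧
      Subgroup.quotientMapOfLE (Subgroup.map_le_range (f := f) Γ) x = t} := by
    constructor
    rintro ⟨x, hfix, hπ⟩
    obtain ⟨a, rfl⟩ := QuotientGroup.mk_surjective x
    rw [Subgroup.quotientMapOfLE_apply_mk] at hπ
    have hta : (QuotientGroup.mk τ : G ⧸ f.range) = QuotientGroup.mk a := by
      rw [hτ, QuotientGroup.out_eq' t, ← hπ]
    obtain ⟨h, hh⟩ := MonoidHom.mem_range.mp (QuotientGroup.eq.mp hta)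
    apply hcond
    intro z hz
    have hk : τ * z * τ⁻¹ ∈ D.map f := by
      have := mem_conjSub.mp hz
      simpa using this
    have h2 := hfix _ hk
    rw [smul_mk_eq_iff] at h2
    have h3 : z = (τ⁻¹ * a) * (a⁻¹ * (τ * z * τ⁻¹ * a)) * (τ⁻¹ * a)⁻¹ := by group
    rw [h3, ← hh]
    exact Subgroup.mul_mem _ (Subgroup.mul_mem _ ⟨h, rfl⟩
      (Subgroup.map_le_range (f := f) Γ h2)) (Subgroup.inv_mem _ ⟨h, rfl⟩)
  rw [Nat.card_of_isEmpty]

open scoped Classical in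
lemma ind_card [Finite G] [Finite H] (f : H →* G) (hf : Function.Injective f)
    (Γ D : Subgroup H) :
    mQ (Γ.map f) (D.map f) =
      ∑ t : G ⧸ f.range,
        (if conjSub (Quotient.out t)⁻¹ (D.map f) ≤ f.range
          then mQ Γ ((conjSub (Quotient.out t)⁻¹ (D.map f)).comap f) else 0) := by
  classical
  have hdecomp : Nat.card {x : G ⧸ Γ.map f // ∀ k ∈ D.map f, k • x = x} =
      ∑ t : G ⧸ f.range, Nat.card {x : G ⧸ Γ.map f // (∀ k ∈ D.map f, k • x = x) ∧
        Subgroup.quotientMapOfLE (Subgroup.map_le_range (f := f) Γ) x = t} := by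
    rw [← natCard_sigma]
    apply Nat.card_congr
    exact ((Equiv.sigmaFiberEquiv (fun p : {x : G ⧸ Γ.map f // ∀ k ∈ D.map f, k • x = x} =>
      Subgroup.quotientMapOfLE (Subgroup.map_le_range (f := f) Γ) p.1)).symm).trans
      (Equiv.sigmaCongrRight fun t => Equiv.subtypeSubtypeEquivSubtypeInter
        (fun x : G ⧸ Γ.map f => ∀ k ∈ Subgroup.map f D, k • x = x)
        (fun x => Subgroup.quotientMapOfLE (Subgroup.map_le_range (f := f) Γ) x = t))
  rw [mQ, hdecomp, Nat.cast_sum]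
  apply Finset.sum_congr rfl
  intro t _
  by_cases hcond : conjSub (Quotient.out t)⁻¹ (D.map f) ≤ f.range
  · rw [if_pos hcond, fib_card_of_cond f hf Γ D t hcond]
  · rw [if_neg hcond, fib_card_of_not_cond f Γ D t hcond, Nat.cast_zero]

end Fiber

section Normalizer

variable {G : Type*} [Group G]

lemma conjSub_eq_iff_mem_normalizer (τ : G) (K : Subgroup G) :
    conjSub τ K = K ↔ τ ∈ (Subgroup.normalizer (K : Set G)) := by
  rw [Subgroup.mem_normalizer_iff'']
  constructor
  · intro h x
    conv_lhs => rw [← h, mem_conjSub]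
  · intro h
    ext x
    rw [mem_conjSub, ← h x]

lemma conjSub_le_iff_mem_normalizer [Finite G] (τ : G) (K : Subgroup G) :
    conjSub τ K ≤ K ↔ τ ∈ (Subgroup.normalizer (K : Set G)) := by
  rw [← conjSub_eq_iff_mem_normalizer]
  constructor
  · intro hle
    exact Subgroup.eq_of_le_of_card_ge hle (by rw [natCard_conjSub])
  · intro h
    exact h.le

lemma card_norm_cosets [Finite G] (H : Subgroup G) :
    Nat.card {t : G ⧸ H // Quotient.out t ∈ (Subgroup.normalizer (H : Set G))} = nuG H := by
  rw [nuG]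
  have pf : ∀ n : (Subgroup.normalizer (H : Set G)), Quotient.out (QuotientGroup.mk (n : G) : G ⧸ H) ∈
      (Subgroup.normalizer (H : Set G)) := by
    intro n
    have h1 : (QuotientGroup.mk (Quotient.out (QuotientGroup.mk (n : G) : G ⧸ H)) : G ⧸ H) =
        QuotientGroup.mk (n : G) := QuotientGroup.out_eq' _
    have h2 := QuotientGroup.eq.mp h1
    have h3 : Quotient.out (QuotientGroup.mk (n : G) : G ⧸ H) =
        (n : G) * ((Quotient.out (QuotientGroup.mk (n : G) : G ⧸ H))⁻¹ * (n : G))⁻¹ := by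
      group
    rw [h3]
    exact Subgroup.mul_mem _ n.2 (Subgroup.inv_mem _ ((Subgroup.le_normalizer (H := H) h2)))
  set φ : (Subgroup.normalizer (H : Set G)) ⧸ H.subgroupOf (Subgroup.normalizer (H : Set G)) →
      {t : G ⧸ H // Quotient.out t ∈ (Subgroup.normalizer (H : Set G))} := fun z =>
    Quotient.liftOn' z (fun n => ⟨QuotientGroup.mk (n : G), pf n⟩) (by
      intro n n' hrel
      rw [QuotientGroup.leftRel_apply, Subgroup.mem_subgroupOf] at hrel
      apply Subtype.ext
      show (QuotientGroup.mk (n : G) : G ⧸ H) = QuotientGroup.mk (n' : G)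
      rw [QuotientGroup.eq]
      simpa using hrel) with hφ
  have hinj : Function.Injective φ := by
    intro z z' hzz
    obtain ⟨n, rfl⟩ := QuotientGroup.mk_surjective z
    obtain ⟨n', rfl⟩ := QuotientGroup.mk_surjective z'
    have : (QuotientGroup.mk (n : G) : G ⧸ H) = QuotientGroup.mk (n' : G) :=
      congrArg Subtype.val hzz
    rw [QuotientGroup.eq] at this
    rw [QuotientGroup.eq]
    · rw [Subgroup.mem_subgroupOf]
      simpa using this
  have hsurj : Function.Surjective φ := by
    rintro ⟨t, ht⟩
    refine ⟨QuotientGroup.mk ⟨Quotient.out t, ht⟩, ?_⟩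
    apply Subtype.ext
    show (QuotientGroup.mk (Quotient.out t) : G ⧸ H) = t
    exact QuotientGroup.out_eq' t
  exact (Nat.card_congr (Equiv.ofBijective φ ⟨hinj, hsurj⟩)).symm

lemma comap_range {H : Type*} [Group H] (f : H →* G) : f.range.comap f = ⊤ := by
  ext x
  simp [Subgroup.mem_comap]

lemma natCard_map {H : Type*} [Group H] (f : H →* G) (hf : Function.Injective f)
    (K : Subgroup H) : Nat.card (K.map f) = Nat.card K :=
  (Nat.card_congr (K.equivMapOfInjective f hf).toEquiv).symm

end Normalizer

section Assembly

lemma toConj_eq_top_iff {G : Type*} [Group G] {K : Subgroup G} :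
    Subgroup.toConj K = Subgroup.toConj (⊤ : Subgroup G) ↔ K = ⊤ := by
  constructor
  · intro h
    obtain ⟨g, hg⟩ := toConj_eq_iff.mp h
    rw [← hg, conjSub_top]
  · rintro rfl; rfl

open scoped Classical in
lemma sum_boole_natCard {α : Type*} [Finite α] [Fintype α] (p : α → Prop) :
    ∑ x : α, (if p x then (1 : ℚ) else 0) = (Nat.card {x // p x} : ℚ) := by
  classical
  rw [Finset.sum_boole, Nat.card_eq_fintype_card, Fintype.card_subtype]

lemma markBasis_toConj_right {G : Type*} [Group G] (c : SubgroupConj G) (K : Subgroup G) :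
    markBasis c (Subgroup.toConj K) = mQ c.rep K := by
  rw [markBasis_def, mQ_rep_right]

lemma markMap_res_ind {G : Type*} [Group G] {H : Type*} [Group H] [Finite G] [Finite H]
    (f : H →* G) (u : BQ H) (d : SubgroupConj H) :
    markMap (resF f (indF f u)) d =
      u.sum fun c a => a * mQ (c.rep.map f) (d.rep.map f) := by
  have step1 : ∀ X : BQ G, markMap (resF f X) d =
      (Finsupp.linearCombination ℚ (fun c : SubgroupConj G => mQ c.rep (d.rep.map f))) X := by
    intro X
    rw [markMap_eq_linearCombination, resF, map_finsuppSum, Finsupp.linearCombination_apply]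
    apply Finsupp.sum_congr
    intro c _
    rw [map_smul, smul_eq_mul, smul_eq_mul, ← markMap_eq_linearCombination, markMap_resBasis]
  rw [step1, indF, map_finsuppSum]
  apply Finsupp.sum_congr
  intro c _
  rw [Finsupp.linearCombination_single, smul_eq_mul, mQ_rep_left]

lemma final_marks {G : Type*} [Group G] [Finite G] {H : Type*} [Group H] [Finite H]
    (f : H →* G) (hf : Function.Injective f) (u : BQ H) (hu : IsTopIdem u)
    (d : SubgroupConj H) :
    (u.sum fun c a => a * mQ (c.rep.map f) (d.rep.map f)) =
      (Nat.card {t : G ⧸ f.range // Quotient.out t ∈ (Subgroup.normalizer (f.range : Set G))} : ℚ) *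
        (if d = Subgroup.toConj (⊤ : Subgroup H) then 1 else 0) := by
  classical
  have hcardrange : Nat.card f.range = Nat.card H :=
    (Nat.card_congr (MonoidHom.ofInjective hf).toEquiv).symm
  -- rewrite each mQ via the fiber decomposition
  have hsum : (u.sum fun c a => a * mQ (c.rep.map f) (d.rep.map f)) =
      ∑ c ∈ u.support, ∑ t : G ⧸ f.range, u c *
        (if conjSub (Quotient.out t)⁻¹ (d.rep.map f) ≤ f.range
          then mQ c.rep ((conjSub (Quotient.out t)⁻¹ (d.rep.map f)).comap f) else 0) := by
    rw [Finsupp.sum]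
    apply Finset.sum_congr rfl
    intro c _
    rw [ind_card f hf c.rep d.rep, Finset.mul_sum]
  rw [hsum, Finset.sum_comm]
  -- evaluate the inner sums using the idempotent property
  have hinner : ∀ t : G ⧸ f.range,
      (∑ c ∈ u.support, u c *
        (if conjSub (Quotient.out t)⁻¹ (d.rep.map f) ≤ f.range
          then mQ c.rep ((conjSub (Quotient.out t)⁻¹ (d.rep.map f)).comap f) else 0)) =
      (if d = Subgroup.toConj (⊤ : Subgroup H) ∧ Quotient.out t ∈ (Subgroup.normalizer (f.range : Set G))
        then 1 else 0) := by
    intro t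
    set τ := Quotient.out t with hτ
    by_cases hcond : conjSub τ⁻¹ (d.rep.map f) ≤ f.range
    · simp only [if_pos hcond]
      set Dt := (conjSub τ⁻¹ (d.rep.map f)).comap f with hDt
      have hmark : (∑ c ∈ u.support, u c * mQ c.rep Dt) = markMap u (Subgroup.toConj Dt) := by
        rw [markMap, Finsupp.sum]
        exact Finset.sum_congr rfl fun c _ => by rw [markBasis_toConj_right]
      rw [hmark]
      have hu2 : markMap u = fun d' => if d' = Subgroup.toConj (⊤ : Subgroup H) then (1 : ℚ)
          else 0 := hu
      simp only [hu2]
      by_cases hd : Subgroup.toConj Dt = Subgroup.toConj (⊤ : Subgroup H)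
      · have hDtop : Dt = ⊤ := toConj_eq_top_iff.mp hd
        have hle : f.range ≤ conjSub τ⁻¹ (d.rep.map f) := by
          intro x hx
          obtain ⟨h, rfl⟩ := MonoidHom.mem_range.mp hx
          have : h ∈ Dt := hDtop ▸ Subgroup.mem_top h
          exact Subgroup.mem_comap.mp this
        have heqS : conjSub τ⁻¹ (d.rep.map f) = f.range := le_antisymm hcond hle
        have hcards : Nat.card (d.rep : Subgroup H) = Nat.card (⊤ : Subgroup H) := by
          have h1 : Nat.card (conjSub τ⁻¹ (d.rep.map f)) = Nat.card d.rep := by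
            rw [natCard_conjSub, natCard_map f hf]
          rw [heqS, hcardrange] at h1
          rw [← h1, Subgroup.card_top]
        have hdtop : d.rep = ⊤ := Subgroup.eq_of_le_of_card_ge le_top hcards.ge
        have hdc : d = Subgroup.toConj (⊤ : Subgroup H) := by
          rw [← toConj_rep d, hdtop]
        have hmapd : d.rep.map f = f.range := by
          rw [hdtop, ← MonoidHom.range_eq_map]
        rw [hmapd] at heqS
        have hnorm : τ ∈ (Subgroup.normalizer (f.range : Set G)) := by
          rw [← inv_mem_iff]
          exact (conjSub_eq_iff_mem_normalizer τ⁻¹ f.range).mp heqS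
        rw [if_pos hd, if_pos ⟨hdc, hnorm⟩]
      · rw [if_neg hd, if_neg]
        rintro ⟨hdc, hnorm⟩
        apply hd
        have hdtop : d.rep = ⊤ := by rw [hdc]; exact rep_top
        have hmapd : d.rep.map f = f.range := by rw [hdtop, ← MonoidHom.range_eq_map]
        have heqS : conjSub τ⁻¹ (d.rep.map f) = f.range := by
          rw [hmapd]
          exact (conjSub_eq_iff_mem_normalizer τ⁻¹ f.range).mpr (inv_mem hnorm)
        have hDfull : Dt = ⊤ := by rw [hDt, heqS, comap_range]
        rw [hDfull]
    · simp only [if_neg hcond, mul_zero, Finset.sum_const_zero]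
      rw [eq_comm, if_neg]
      rintro ⟨hdc, hnorm⟩
      apply hcond
      have hdtop : d.rep = ⊤ := by rw [hdc]; exact rep_top
      have hmapd : d.rep.map f = f.range := by rw [hdtop, ← MonoidHom.range_eq_map]
      rw [hmapd]
      exact ((conjSub_eq_iff_mem_normalizer τ⁻¹ f.range).mpr (inv_mem hnorm)).le
  rw [Finset.sum_congr rfl fun t _ => hinner t]
  by_cases hd : d = Subgroup.toConj (⊤ : Subgroup H)
  · rw [hd, if_pos rfl, mul_one]
    have hsimp : ∀ t : G ⧸ f.range,
        (if Subgroup.toConj (⊤ : Subgroup H) = Subgroup.toConj (⊤ : Subgroup H) ∧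
            Quotient.out t ∈ (Subgroup.normalizer (f.range : Set G)) then (1 : ℚ) else 0)
        = (if Quotient.out t ∈ (Subgroup.normalizer (f.range : Set G)) then (1 : ℚ) else 0) := by
      intro t
      by_cases hN : Quotient.out t ∈ (Subgroup.normalizer (f.range : Set G))
      · rw [if_pos ⟨rfl, hN⟩, if_pos hN]
      · rw [if_neg (fun hc => hN hc.2), if_neg hN]
    rw [Finset.sum_congr rfl fun t _ => hsimp t]
    exact sum_boole_natCard _
  · rw [if_neg hd, mul_zero]
    rw [Finset.sum_congr rfl fun t _ => if_neg (fun hc => hd hc.1)]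
    exact Finset.sum_const_zero

end Assembly

/-- If `u_H` is the primitive idempotent of `B(H) ⊗ ℚ` supported at `H`, then
`Res^G_H (Ind^G_H u_H) = |N_G(H)/H| · u_H`. -/
theorem res_ind_of_top_idempotent (G : Type*) [Group G] [Finite G]
    (H : Subgroup G) (u : BQ ↥H) (hu : IsTopIdem u) :
    resF H.subtype (indF H.subtype u) = (nuG H : ℚ) • u := by
  classical
  have hf : Function.Injective H.subtype := Subgroup.subtype_injective H
  have hmarks : ∀ d, markMap (resF H.subtype (indF H.subtype u)) d =
      markMap ((nuG H : ℚ) • u) d := by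
    intro d
    rw [markMap_res_ind, final_marks H.subtype hf u hu d]
    have hsmul : markMap ((nuG H : ℚ) • u) d = (nuG H : ℚ) * markMap u d := by
      rw [markMap_eq_linearCombination, markMap_eq_linearCombination, map_smul, smul_eq_mul]
    rw [hsmul]
    have hu2 : markMap u = fun d' => if d' = Subgroup.toConj (⊤ : Subgroup ↥H) then (1 : ℚ)
        else 0 := hu
    simp only [hu2]
    have hcount : Nat.card {t : G ⧸ H.subtype.range //
        Quotient.out t ∈ (Subgroup.normalizer (H.subtype.range : Set G))} = nuG H := by
      rw [Subgroup.range_subtype]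
      exact card_norm_cosets H
    rw [hcount]
  have h0 : resF H.subtype (indF H.subtype u) - (nuG H : ℚ) • u = 0 :=
    markMap_zero_of _ fun d => by rw [markMap_sub, hmarks d, sub_self]
  exact sub_eq_zero.mp h0

end
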